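/- arXiv:2211.15172 — 4 statements merged into one kernel-verified Lean document; each statement's English description precedes it below -/
import Mathlib

section
/- A Hermitian matrix A of trace 1 lies in the convex hull of the set {P Hermitian : P·P = P, tr(P) = 1} if and only if A is positive semidefinite. -/
open Matrix in
open scoped ComplexOrder in
private lemma psd_smul {m : ℕ} {A : Matrix (Fin m) (Fin m) ℂ} (hA : A.PosSemidef)
    {a : ℝ} (ha : 0 ≤ a) : (a • A).PosSemidef := by
  refine posSemidef_iff_dotProduct_mulVec.mpr ⟨?_, fun x => ?_⟩
  · unfold Matrix.IsHermitian
    rw [conjTranspose_smul, star_trivial, hA.1]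
  · rw [smul_mulVec, dotProduct_smul]
    have := hA.dotProduct_mulVec_nonneg x
    have : (0:ℂ) ≤ (a:ℂ) * (star x ⬝ᵥ A *ᵥ x) :=
      mul_nonneg (by exact_mod_cast ha) this
    simpa [Complex.real_smul] using this

open Matrix in
open scoped ComplexOrder in
private lemma psd_convex {m : ℕ} :
    Convex ℝ {B : Matrix (Fin m) (Fin m) ℂ | B.PosSemidef} := by
  intro A hA B hB a b ha hb _
  exact (psd_smul hA ha).add (psd_smul hB hb)

open Matrix in
open scoped ComplexOrder in
theorem stmt_2 (n : ℕ) (A : Matrix (Fin (n+1)) (Fin (n+1)) ℂ)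
    (hA : A.IsHermitian) (htr : A.trace = 1) :
    A ∈ convexHull ℝ
        {P : Matrix (Fin (n+1)) (Fin (n+1)) ℂ | P.IsHermitian ∧ P * P = P ∧ P.trace = 1}
      ↔ A.PosSemidef := by
  constructor
  · intro hmem
    have hsub : {P : Matrix (Fin (n+1)) (Fin (n+1)) ℂ |
        P.IsHermitian ∧ P * P = P ∧ P.trace = 1} ⊆
        {B : Matrix (Fin (n+1)) (Fin (n+1)) ℂ | B.PosSemidef} := by
      rintro P ⟨hP, hidem, -⟩
      have : P = Pᴴ * P := by rw [hP, hidem]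
      rw [this]
      exact posSemidef_conjTranspose_mul_self P
    exact convexHull_min hsub psd_convex hmem
  · intro hpsd
    set U : Matrix (Fin (n+1)) (Fin (n+1)) ℂ := ((hA.eigenvectorUnitary : Matrix.unitaryGroup (Fin (n+1)) ℂ) : Matrix (Fin (n+1)) (Fin (n+1)) ℂ) with hU
    have hUU : star U * U = 1 := Unitary.coe_star_mul_self hA.eigenvectorUnitary
    set w : Fin (n+1) → ℝ := hA.eigenvalues with hw
    set P : Fin (n+1) → Matrix (Fin (n+1)) (Fin (n+1)) ℂ :=
      fun i => U * single i i 1 * star U with hP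
    -- weights nonneg
    have hw0 : ∀ i ∈ Finset.univ, 0 ≤ w i := fun i _ => hpsd.eigenvalues_nonneg i
    -- weights sum to 1
    have hE : ∀ i : Fin (n+1), (single i i 1 : Matrix (Fin (n+1)) (Fin (n+1)) ℂ)ᴴ
        = single i i 1 := by
      intro i
      ext a b
      simp only [conjTranspose_apply, single, of_apply]
      by_cases hb : i = b <;> by_cases ha : i = a <;> simp [ha, hb]
    have htrA : A.trace = ∑ i, (w i : ℂ) := by
      conv_lhs => rw [hA.spectral_theorem, Unitary.conjStarAlgAut_apply]
      rw [Matrix.trace_mul_cycle, ← hU, hUU, one_mul, trace_diagonal]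
      rfl
    have hw1 : ∑ i, w i = 1 := by
      have : ((∑ i, w i : ℝ) : ℂ) = 1 := by push_cast; rw [← htrA, htr]
      exact_mod_cast this
    -- each P i is in the set
    have hPmem : ∀ i ∈ Finset.univ, P i ∈ {P : Matrix (Fin (n+1)) (Fin (n+1)) ℂ |
        P.IsHermitian ∧ P * P = P ∧ P.trace = 1} := by
      intro i _
      refine ⟨?_, ?_, ?_⟩
      · unfold Matrix.IsHermitian
        simp only [hP, conjTranspose_mul, conjTranspose_conjTranspose, star_eq_conjTranspose,
          hE, mul_assoc]
      · simp only [hP, mul_assoc]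
        rw [show star U * (U * (single i i 1 * star U))
            = single i i 1 * star U by rw [← mul_assoc, hUU, one_mul]]
        rw [show (single i i 1 : Matrix (Fin (n+1)) (Fin (n+1)) ℂ)
            * (single i i 1 * star U) = single i i 1 * star U by
          rw [← mul_assoc, single_mul_single_same, mul_one]]
      · simp only [hP]
        rw [Matrix.trace_mul_cycle, hUU, one_mul]
        simp [Matrix.trace, Matrix.diag, Matrix.single]
    -- A is the convex combination
    have hAeq : A = ∑ i, w i • P i := by
      conv_lhs => rw [hA.spectral_theorem, Unitary.conjStarAlgAut_apply]
      have hdiag : (diagonal (RCLike.ofReal ∘ w) : Matrix (Fin (n+1)) (Fin (n+1)) ℂ)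
          = ∑ i, (w i : ℂ) • single i i 1 := by
        ext j k
        simp only [Matrix.sum_apply, Matrix.smul_apply, Matrix.single,
          Matrix.of_apply, diagonal_apply, Function.comp_apply, smul_eq_mul, mul_ite, mul_one,
          mul_zero]
        by_cases h : j = k
        · subst h; simp
        · rw [if_neg h]
          exact (Finset.sum_eq_zero fun x _ => if_neg fun hx =>
            h (hx.1.symm.trans hx.2)).symm
      rw [← hU, hdiag, Finset.mul_sum, Finset.sum_mul]
      refine Finset.sum_congr rfl fun i _ => ?_
      rw [mul_smul_comm, smul_mul_assoc]
      show (w i : ℂ) • P i = w i • P i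
      ext j k
      simp [Complex.real_smul]
    rw [hAeq]
    exact Convex.sum_mem (convex_convexHull ℝ _) hw0 hw1
      (fun i hi => subset_convexHull ℝ _ (hPmem i hi))
end

section
/- For the rational function F(a) = 8πd·(1 + (2a²δ − c)/((2a−1)² + c)) with d > 0, 0 < c < 1 and δ > 0, F attains its global minimum at some a_min with 0 < a_min < 1/2; in particular F′(0) < 0 and F′(1/2) > 0. -/
open Real in
theorem stmt_11 (d c δ : ℝ) (hd : 0 < d) (hc0 : 0 < c) (hc1 : c < 1) (hδ : 0 < δ)
    (F : ℝ → ℝ)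
    (hF : ∀ a, F a = 8 * π * d * (1 + (2 * a ^ 2 * δ - c) / ((2 * a - 1) ^ 2 + c))) :
    (∃ a_min : ℝ, 0 < a_min ∧ a_min < 1 / 2 ∧ ∀ a : ℝ, F a_min ≤ F a) ∧
    deriv F 0 < 0 ∧ 0 < deriv F (1 / 2) := by
  have hπ := Real.pi_pos
  have hFeq : F = fun a => 8 * π * d * (1 + (2 * a ^ 2 * δ - c) / ((2 * a - 1) ^ 2 + c)) :=
    funext hF
  subst hFeq
  have hDpos : ∀ a : ℝ, 0 < (2 * a - 1) ^ 2 + c := fun a => by positivity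
  constructor
  · have hex : ∃ m : ℝ, m < 0 ∧
        2 * c * m ^ 2 - (δ * (1 + c) - 2 * c) * m - δ * c = 0 := by
      set B : ℝ := δ * (1 + c) - 2 * c with hB
      have hpos : (0:ℝ) < B ^ 2 + 8 * δ * c ^ 2 := by positivity
      set s : ℝ := Real.sqrt (B ^ 2 + 8 * δ * c ^ 2) with hs
      have hs2 : s ^ 2 = B ^ 2 + 8 * δ * c ^ 2 := Real.sq_sqrt (le_of_lt hpos)
      have hspos : 0 < s := Real.sqrt_pos.mpr hpos
      have hsB : B < s := by
        have h2 : B ^ 2 < s ^ 2 := by nlinarith [hs2, mul_pos (mul_pos hδ hc0) hc0]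
        exact lt_of_pow_lt_pow_left₀ 2 hspos.le h2
      refine ⟨(B - s) / (4 * c), div_neg_of_neg_of_pos (by linarith) (by linarith), ?_⟩
      field_simp
      nlinarith [hs2]
    obtain ⟨m, hm0, hrel⟩ := hex
    have hδm : 0 < δ - 2 * m := by linarith
    refine ⟨-m / (δ - 2 * m), div_pos (by linarith) hδm, ?_, ?_⟩
    · rw [div_lt_div_iff₀ hδm (by norm_num : (0:ℝ) < 2)]; linarith
    · intro a
      have hge : ∀ x : ℝ, m ≤ (2 * x ^ 2 * δ - c) / ((2 * x - 1) ^ 2 + c) := by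
        intro x
        rw [le_div_iff₀ (hDpos x)]
        nlinarith [sq_nonneg ((δ - 2 * m) * x + m), hrel, hδm, mul_pos hδm hδm]
      have heq : (2 * (-m / (δ - 2 * m)) ^ 2 * δ - c) /
          ((2 * (-m / (δ - 2 * m)) - 1) ^ 2 + c) = m := by
        rw [div_eq_iff (ne_of_gt (hDpos _))]
        field_simp
        ring_nf
        linear_combination (δ - 2 * m) * hrel
      have h8 : 0 < 8 * π * d := by positivity
      simp only
      rw [heq]
      nlinarith [hge a, h8]
  · have hder : ∀ a : ℝ, HasDerivAt
        (fun a => 8 * π * d * (1 + (2 * a ^ 2 * δ - c) / ((2 * a - 1) ^ 2 + c)))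
        (8 * π * d * ((4 * a * δ * ((2 * a - 1) ^ 2 + c) -
          (2 * a ^ 2 * δ - c) * (2 * (2 * a - 1) * 2)) / ((2 * a - 1) ^ 2 + c) ^ 2)) a := by
      intro a
      have h1 : HasDerivAt (fun x : ℝ => 2 * x ^ 2 * δ - c) (4 * a * δ) a := by
        have := (((hasDerivAt_pow 2 a).const_mul 2).mul_const δ).sub_const c
        exact this.congr_deriv (by ring)
      have h2 : HasDerivAt (fun x : ℝ => (2 * x - 1) ^ 2 + c) (2 * (2 * a - 1) * 2) a := by
        have hl : HasDerivAt (fun x : ℝ => 2 * x - 1) 2 a := by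
          simpa using ((hasDerivAt_id a).const_mul 2).sub_const 1
        have := (hl.pow 2).add_const c
        exact this.congr_deriv (by ring)
      have h3 := h1.div h2 (ne_of_gt (hDpos a))
      have h4 := (h3.const_add 1).const_mul (8 * π * d)
      exact h4
    constructor
    · have h0 : deriv (fun a => 8 * π * d * (1 + (2 * a ^ 2 * δ - c) / ((2 * a - 1) ^ 2 + c))) 0
          = -(32 * π * d * c / (1 + c) ^ 2) := by
        rw [(hder 0).deriv]
        have : ((2 * (0:ℝ) - 1) ^ 2 + c) = 1 + c := by ring
        field_simp
        ring
      rw [h0]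
      have : 0 < 32 * π * d * c / (1 + c) ^ 2 := by positivity
      linarith
    · have h0 : deriv (fun a => 8 * π * d * (1 + (2 * a ^ 2 * δ - c) / ((2 * a - 1) ^ 2 + c))) (1/2)
          = 16 * π * d * δ / c := by
        rw [(hder (1/2)).deriv]
        have hc : ((2 * (1/2:ℝ) - 1) ^ 2 + c) = c := by ring
        rw [hc]
        field_simp
        ring
      rw [h0]
      positivity
end

section
/- The function G(a) = 8π·(1 + (4a² − 1)/((2a−1)² + 1)) defined for real a attains its minimum on the interval [0, 1/2] at a = (3−√5)/4, and the minimum value is G((3−√5)/4) = 4(3−√5)π. -/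
open Real in
theorem stmt_12 (G : ℝ → ℝ)
    (hG : ∀ a, G a = 8 * π * (1 + (4 * a ^ 2 - 1) / ((2 * a - 1) ^ 2 + 1))) :
    (∀ a ∈ Set.Icc (0 : ℝ) (1 / 2), G ((3 - Real.sqrt 5) / 4) ≤ G a) ∧
    G ((3 - Real.sqrt 5) / 4) = 4 * (3 - Real.sqrt 5) * π := by
  have hs : Real.sqrt 5 ^ 2 = 5 := Real.sq_sqrt (by norm_num)
  have hsnn : (0:ℝ) ≤ Real.sqrt 5 := Real.sqrt_nonneg 5
  have hslt : Real.sqrt 5 < 3 := by nlinarith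
  have hpi := Real.pi_pos
  have hval : G ((3 - Real.sqrt 5) / 4) = 4 * (3 - Real.sqrt 5) * π := by
    rw [hG]
    have hD : (2 * ((3 - Real.sqrt 5) / 4) - 1) ^ 2 + 1 ≠ 0 := by positivity
    field_simp
    linear_combination (16 * (Real.sqrt 5 - 1)) * hs
  refine ⟨fun a _ => ?_, hval⟩
  rw [hval, hG]
  have hD : (0:ℝ) < (2 * a - 1) ^ 2 + 1 := by positivity
  have key : (1 - Real.sqrt 5) / 2 ≤ (4 * a ^ 2 - 1) / ((2 * a - 1) ^ 2 + 1) := by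
    rw [div_le_div_iff₀ (by norm_num) hD]
    nlinarith [sq_nonneg (a - (3 - Real.sqrt 5) / 4), hs, hsnn]
  nlinarith [key, hpi]
end

section
/- Let (Λ_g) be a sequence of nonnegative reals such that for all sufficiently large g and all a ∈ [0,1/2], Λ_g ≤ 8π·d_g·(1 + (2a²(1 + (g−1)/d_g) − c_{n_g})/((2a−1)² + c_{n_g})), where d_g = g+1 and c_{n_g} = (n_g−1)/(n_g+1) with n_g = ⌊√(g+1)⌋. Then limsup_{g→∞} Λ_g/g ≤ 4(3−√5)π. -/
open Real Filter

private lemma hr_lim : Tendsto (fun x : ℝ => (x - 1) / (x + 1)) atTop (nhds 1) := by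
  have h : Tendsto (fun x : ℝ => 1 - 2 / (x + 1)) atTop (nhds 1) := by
    have h2 : Tendsto (fun x : ℝ => 2 / (x + 1)) atTop (nhds 0) :=
      (tendsto_atTop_add_const_right _ 1 tendsto_id).const_div_atTop 2
    simpa using tendsto_const_nhds.sub h2
  refine h.congr' ?_
  filter_upwards [eventually_ge_atTop (0 : ℝ)] with x hx
  have : x + 1 ≠ 0 := by linarith
  field_simp
  ring

private lemma sqrt_nat_tendsto : Tendsto (fun g : ℕ => ((Nat.sqrt (g + 1) : ℕ) : ℝ)) atTop atTop := by
  apply tendsto_natCast_atTop_atTop.comp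
  refine tendsto_atTop_atTop.mpr fun n => ⟨n * n, fun g hg => ?_⟩
  exact Nat.le_sqrt.mpr (le_trans hg (Nat.le_succ _))

open Real Filter in
theorem stmt_14 (Λ : ℕ → ℝ) (hΛ : ∀ g, 0 ≤ Λ g)
    (hbound : ∃ N : ℕ, ∀ g ≥ N, ∀ a ∈ Set.Icc (0 : ℝ) (1 / 2),
      Λ g ≤ 8 * π * ((g : ℝ) + 1) *
        (1 + (2 * a ^ 2 * (1 + ((g : ℝ) - 1) / ((g : ℝ) + 1))
                - ((Nat.sqrt (g + 1) : ℝ) - 1) / ((Nat.sqrt (g + 1) : ℝ) + 1)) /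
             ((2 * a - 1) ^ 2 + ((Nat.sqrt (g + 1) : ℝ) - 1) / ((Nat.sqrt (g + 1) : ℝ) + 1)))) :
    Filter.limsup (fun g : ℕ => Λ g / (g : ℝ)) Filter.atTop ≤ 4 * (3 - Real.sqrt 5) * π := by
  obtain ⟨N, hN⟩ := hbound
  set a : ℝ := (3 - Real.sqrt 5) / 4 with ha
  have h5 : Real.sqrt 5 ^ 2 = 5 := Real.sq_sqrt (by norm_num)
  have h5pos : (0:ℝ) ≤ Real.sqrt 5 := Real.sqrt_nonneg 5
  have h5lt : Real.sqrt 5 < 3 := by nlinarith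
  have h5gt : 2 < Real.sqrt 5 := by nlinarith
  have haI : a ∈ Set.Icc (0 : ℝ) (1 / 2) := by
    constructor <;> [skip; skip] <;> rw [ha] <;> nlinarith
  -- the comparison function
  set c : ℕ → ℝ := fun g => ((Nat.sqrt (g + 1) : ℝ) - 1) / ((Nat.sqrt (g + 1) : ℝ) + 1) with hc
  set F : ℕ → ℝ := fun g => 8 * π * (((g : ℝ) + 1) / g) *
      (1 + (2 * a ^ 2 * (1 + ((g : ℝ) - 1) / ((g : ℝ) + 1)) - c g)
        / ((2 * a - 1) ^ 2 + c g)) with hF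
  set L : ℝ := 4 * (3 - Real.sqrt 5) * π with hL
  have hclim : Tendsto c atTop (nhds 1) := hr_lim.comp sqrt_nat_tendsto
  have hqlim : Tendsto (fun g : ℕ => ((g : ℝ) - 1) / ((g : ℝ) + 1)) atTop (nhds 1) :=
    hr_lim.comp tendsto_natCast_atTop_atTop
  have hplim : Tendsto (fun g : ℕ => ((g : ℝ) + 1) / g) atTop (nhds 1) := by
    have h2 : Tendsto (fun g : ℕ => 1 + 1 / (g : ℝ)) atTop (nhds 1) := by
      simpa using tendsto_const_nhds.add (tendsto_one_div_atTop_nhds_zero_nat (𝕜 := ℝ))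
    refine h2.congr' ?_
    filter_upwards [eventually_ge_atTop 1] with g hg
    have : (g : ℝ) ≠ 0 := by positivity
    field_simp
  have hden : ((2 * a - 1) ^ 2 + (1:ℝ)) ≠ 0 := by positivity
  have hFlim : Tendsto F atTop (nhds L) := by
    have key : Tendsto F atTop (nhds (8 * π * 1 *
        (1 + (2 * a ^ 2 * (1 + 1) - 1) / ((2 * a - 1) ^ 2 + 1)))) := by
      refine ((tendsto_const_nhds.mul hplim).mul (tendsto_const_nhds.add
        (Tendsto.div ?_ ?_ hden)))
      · exact (tendsto_const_nhds.mul (tendsto_const_nhds.add hqlim)).sub hclim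
      · exact tendsto_const_nhds.add hclim
    convert key using 2
    rw [hL, ha]
    have hne : (5 : ℝ) - Real.sqrt 5 ≠ 0 := by nlinarith
    have : (2 * ((3 - Real.sqrt 5) / 4) - 1) ^ 2 + 1 = (5 - Real.sqrt 5) / 2 := by nlinarith
    rw [this]
    field_simp
    nlinarith
  have hle : ∀ᶠ g in atTop, Λ g / g ≤ F g := by
    filter_upwards [eventually_ge_atTop N, eventually_ge_atTop 1] with g hgN hg1
    have hgpos : (0:ℝ) < g := by exact_mod_cast hg1
    have hb := hN g hgN a haI
    have : Λ g / g ≤ (8 * π * ((g : ℝ) + 1) *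
        (1 + (2 * a ^ 2 * (1 + ((g : ℝ) - 1) / ((g : ℝ) + 1)) - c g)
          / ((2 * a - 1) ^ 2 + c g))) / g := by
      exact div_le_div_of_nonneg_right hb hgpos.le
    calc Λ g / g ≤ _ := this
      _ = F g := by rw [hF]; field_simp
  have hcob : IsCoboundedUnder (· ≤ ·) atTop (fun g : ℕ => Λ g / g) := by
    refine isCoboundedUnder_le_of_eventually_le atTop (x := 0) ?_
    filter_upwards [eventually_ge_atTop 1] with g hg
    have : (0:ℝ) ≤ g := by positivity
    exact div_nonneg (hΛ g) this
  have hbdd : IsBoundedUnder (· ≤ ·) atTop F := hFlim.isBoundedUnder_le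
  calc Filter.limsup (fun g : ℕ => Λ g / (g : ℝ)) atTop
      ≤ Filter.limsup F atTop := Filter.limsup_le_limsup hle hcob hbdd
    _ = L := hFlim.limsup_eq
end
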